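/- arXiv:1902.02921 — 2 statements merged into one kernel-verified Lean document; each statement's English description precedes it below -/
import Mathlib

section
/- Let D be a binary dataset with |D| ≥ 2 and let X and Y be item segments of length N having N−1 mutual items. If N ≥ log₂|D| − log₂ log₂|D| + 2, then score(X ∪ Y) ≥ score(X) + score(Y) − score(X ∩ Y). -/
open Finset

/-- The marginal probability `p(X = v)`: the probability that the coordinates in `X`
agree with `v`. -/
noncomputable def marg {K : ℕ} (p : (Fin K → Bool) → ℝ) (X : Finset (Fin K))
    (v : Fin K → Bool) : ℝ :=
  ∑ t ∈ Finset.univ.filter (fun t : Fin K → Bool => ∀ i ∈ X, t i = v i), p t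

/-- `p` is a probability distribution on `{0,1}^K`. -/
def IsDist {K : ℕ} (p : (Fin K → Bool) → ℝ) : Prop :=
  (∀ t, 0 ≤ p t) ∧ ∑ t : Fin K → Bool, p t = 1

/-- The empirical distribution of a dataset `D`. -/
noncomputable def empDist {K : ℕ} (D : Multiset (Fin K → Bool)) : (Fin K → Bool) → ℝ :=
  fun v => (D.count v : ℝ) / (Multiset.card D : ℝ)

/-- The entropy (base 2) of the marginal of `p` on the attribute set `X`,
summing over representative vectors which are `false` outside of `X`. -/
noncomputable def segEntropy {K : ℕ} (p : (Fin K → Bool) → ℝ) (X : Finset (Fin K)) : ℝ :=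
  -∑ v ∈ Finset.univ.filter (fun v : Fin K → Bool => ∀ i, i ∉ X → v i = false),
      marg p X v * Real.logb 2 (marg p X v)

/-- The item segment of the attributes at positions `a,…,b` in the order `o`. -/
def segIv {K : ℕ} (o : Equiv.Perm (Fin K)) (a b : ℕ) : Finset (Fin K) :=
  (Finset.univ.filter (fun k : Fin K => a ≤ (k : ℕ) ∧ (k : ℕ) ≤ b)).image o

/-- A collection `𝒞 = {C_1, …, C_L} ∈ Seg(o)` of item segments covering all attributes,
forming an antichain, listed in the order of their first attribute.  The `i`-th segment
(for `0 ≤ i < L`) consists of the positions `s i, …, e i` in the order `o`. -/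
structure SegColl (K : ℕ) where
  /-- number of segments -/
  L : ℕ
  hL : 0 < L
  /-- start position of each segment -/
  s : ℕ → ℕ
  /-- end position of each segment -/
  e : ℕ → ℕ
  s_mono : ∀ i, i + 1 < L → s i < s (i + 1)
  e_mono : ∀ i, i + 1 < L → e i < e (i + 1)
  s_le_e : ∀ i, i < L → s i ≤ e i
  s_first : s 0 = 0
  e_last : e (L - 1) = K - 1
  e_lt : ∀ i, i < L → e i < K
  covers : ∀ i, i + 1 < L → s (i + 1) ≤ e i + 1

/-- The `i`-th item segment `C_{i+1}` of the collection, under the order `o`. -/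
def SegColl.seg {K : ℕ} (𝒞 : SegColl K) (o : Equiv.Perm (Fin K)) (i : ℕ) : Finset (Fin K) :=
  segIv o (𝒞.s i) (𝒞.e i)

/-- The intersection `S_i = C_i ∩ C_{i+1}` of consecutive segments. -/
def SegColl.ovl {K : ℕ} (𝒞 : SegColl K) (o : Equiv.Perm (Fin K)) (i : ℕ) : Finset (Fin K) :=
  𝒞.seg o i ∩ 𝒞.seg o (i + 1)

/-- Membership of a distribution `p` in the model `M(𝒞)`:
`p(A = t) ∏_{i=1}^{L-1} p(S_i = t) = ∏_{i=1}^{L} p(C_i = t)` for all `t`. -/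
def memModel {K : ℕ} (o : Equiv.Perm (Fin K)) (𝒞 : SegColl K)
    (p : (Fin K → Bool) → ℝ) : Prop :=
  IsDist p ∧ ∀ t : Fin K → Bool,
    p t * ∏ i ∈ Finset.range (𝒞.L - 1), marg p (𝒞.ovl o i) t
      = ∏ i ∈ Finset.range 𝒞.L, marg p (𝒞.seg o i) t

/-- The number of free parameters `df(𝒞)`. -/
def SegColl.df {K : ℕ} (𝒞 : SegColl K) (o : Equiv.Perm (Fin K)) : ℤ :=
  (∑ i ∈ Finset.range 𝒞.L, ((2 : ℤ) ^ (𝒞.seg o i).card - 1))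
    - ∑ i ∈ Finset.range (𝒞.L - 1), ((2 : ℤ) ^ (𝒞.ovl o i).card - 1)

/-- The score of a single item segment `C`:
`score(C) = |D| H(C; D) + (log₂|D|/2)(2^{|C|} - 1)`. -/
noncomputable def segScore {K : ℕ} (D : Multiset (Fin K → Bool)) (C : Finset (Fin K)) : ℝ :=
  (Multiset.card D : ℝ) * segEntropy (empDist D) C
    + Real.logb 2 (Multiset.card D) / 2 * ((2 : ℝ) ^ C.card - 1)

/-- The score of a collection: `score(𝒞) = ∑ score(C_i) - ∑ score(S_i)`. -/
noncomputable def collScore {K : ℕ} (D : Multiset (Fin K → Bool)) (o : Equiv.Perm (Fin K))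
    (𝒞 : SegColl K) : ℝ :=
  ∑ i ∈ Finset.range 𝒞.L, segScore D (𝒞.seg o i)
    - ∑ i ∈ Finset.range (𝒞.L - 1), segScore D (𝒞.ovl o i)

/-- `X` is an item segment for the order `o`: a set of consecutive attributes. -/
def IsSegment {K : ℕ} (o : Equiv.Perm (Fin K)) (X : Finset (Fin K)) : Prop :=
  ∃ a b : ℕ, b < K ∧ a ≤ b ∧ X = segIv o a b


section AuxLemmas

variable {K : ℕ}

/-- representatives of an attribute set -/
def reps (A : Finset (Fin K)) : Finset (Fin K → Bool) :=
  Finset.univ.filter (fun v => ∀ i, i ∉ A → v i = false)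

lemma marg_nonneg {p : (Fin K → Bool) → ℝ} (hp : ∀ t, 0 ≤ p t) (A : Finset (Fin K))
    (v : Fin K → Bool) : 0 ≤ marg p A v :=
  Finset.sum_nonneg fun t _ => hp t

lemma sum_marg {p : (Fin K → Bool) → ℝ} (A : Finset (Fin K)) :
    ∑ v ∈ reps A, marg p A v = ∑ t : Fin K → Bool, p t := by
  unfold marg
  have hmap : ∀ t : Fin K → Bool, t ∈ (Finset.univ : Finset (Fin K → Bool)) →
      (fun i => if i ∈ A then t i else false) ∈ reps A := by
    intro t _
    simp only [reps, Finset.mem_filter, Finset.mem_univ, true_and]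
    intro i hi; simp [hi]
  calc ∑ v ∈ reps A, ∑ t ∈ Finset.univ.filter (fun t : Fin K → Bool => ∀ i ∈ A, t i = v i), p t
      = ∑ v ∈ reps A, ∑ t ∈ Finset.univ.filter
          (fun t : Fin K → Bool => (fun i => if i ∈ A then t i else false) = v), p t := by
        refine Finset.sum_congr rfl fun v hv => ?_
        refine Finset.sum_congr ?_ fun _ _ => rfl
        ext t
        simp only [Finset.mem_filter, Finset.mem_univ, true_and, reps] at hv ⊢
        constructor
        · intro h
          funext i
          by_cases hi : i ∈ A
          · simpa [hi] using h i hi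
          · simp [hi, hv i hi]
        · rintro rfl i hi; simp [hi]
    _ = ∑ t : Fin K → Bool, p t := Finset.sum_fiberwise_of_maps_to hmap p

lemma reps_insert {x : Fin K} {A : Finset (Fin K)} (hx : x ∉ A) :
    reps (insert x A) = reps A ∪ (reps A).image (fun v => Function.update v x true) := by
  ext w
  simp only [reps, Finset.mem_filter, Finset.mem_univ, true_and, Finset.mem_union,
    Finset.mem_image, Finset.mem_insert]
  constructor
  · intro h
    cases hwx : w x with
    | false =>
      left; intro i hi
      by_cases hix : i = x
      · subst hix; exact hwx
      · exact h i (by tauto)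
    | true =>
      right
      refine ⟨Function.update w x false, fun i hi => ?_, ?_⟩
      · by_cases hix : i = x
        · subst hix; simp
        · rw [Function.update_apply, if_neg hix]; exact h i (by tauto)
      · funext i
        by_cases hix : i = x
        · subst hix; simp [hwx]
        · simp [Function.update_apply, hix]
  · rintro (h | ⟨v, hv, rfl⟩) i hi
    · exact h i (fun hiA => hi (Or.inr hiA))
    · have hix : i ≠ x := fun h' => hi (h' ▸ Or.inl rfl)
      rw [Function.update_apply, if_neg hix]
      exact hv i (fun hiA => hi (Or.inr hiA))

lemma mem_reps_false {x : Fin K} {A : Finset (Fin K)} (hx : x ∉ A) {v : Fin K → Bool}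
    (hv : v ∈ reps A) : v x = false := by
  simp only [reps, Finset.mem_filter] at hv
  exact hv.2 x hx

lemma marg_split {p : (Fin K → Bool) → ℝ} {x : Fin K} {A : Finset (Fin K)} (hx : x ∉ A)
    {v : Fin K → Bool} (hvx : v x = false) :
    marg p A v = marg p (insert x A) v + marg p (insert x A) (Function.update v x true) := by
  unfold marg
  rw [← Finset.sum_filter_add_sum_filter_not
    (Finset.univ.filter (fun t : Fin K → Bool => ∀ i ∈ A, t i = v i)) (fun t => t x = false)]
  congr 1
  · rw [Finset.filter_filter]
    refine Finset.sum_congr ?_ fun _ _ => rfl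
    ext t
    simp only [Finset.mem_filter, Finset.mem_univ, true_and, Finset.mem_insert]
    constructor
    · rintro ⟨h, htx⟩ i (rfl | hi)
      · rw [htx, hvx]
      · exact h i hi
    · intro h
      exact ⟨fun i hi => h i (Or.inr hi), (h x (Or.inl rfl)).trans hvx⟩
  · rw [Finset.filter_filter]
    refine Finset.sum_congr ?_ fun _ _ => rfl
    ext t
    simp only [Finset.mem_filter, Finset.mem_univ, true_and, Finset.mem_insert,
      Bool.not_eq_false]
    constructor
    · rintro ⟨h, htx⟩ i (rfl | hi)
      · rw [htx]; simp
      · rw [Function.update_apply, if_neg (fun h' : i = x => hx (h' ▸ hi))]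
        exact h i hi
    · intro h
      refine ⟨fun i hi => ?_, by simpa using h x (Or.inl rfl)⟩
      have := h i (Or.inr hi)
      rwa [Function.update_apply, if_neg (fun h' : i = x => hx (h' ▸ hi))] at this

lemma pt_mono {a b : ℝ} (ha : 0 ≤ a) (hb : 0 ≤ b) :
    a * Real.logb 2 a + b * Real.logb 2 b ≤ (a + b) * Real.logb 2 (a + b) := by
  have h1 : a * Real.logb 2 a ≤ a * Real.logb 2 (a + b) := by
    rcases ha.eq_or_lt with h | h
    · simp [← h]
    · exact mul_le_mul_of_nonneg_left
        (Real.logb_le_logb_of_le one_lt_two h (by linarith)) ha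
  have h2 : b * Real.logb 2 b ≤ b * Real.logb 2 (a + b) := by
    rcases hb.eq_or_lt with h | h
    · simp [← h]
    · exact mul_le_mul_of_nonneg_left
        (Real.logb_le_logb_of_le one_lt_two h (by linarith)) hb
  nlinarith [h1, h2]

lemma pt_sub {a b : ℝ} (ha : 0 ≤ a) (hb : 0 ≤ b) :
    (a + b) * Real.logb 2 (a + b) ≤ a * Real.logb 2 a + b * Real.logb 2 b + (a + b) := by
  have l2 : (0:ℝ) < Real.log 2 := Real.log_pos one_lt_two
  have key : (a + b) * Real.log (a + b)
      ≤ a * Real.log a + b * Real.log b + (a + b) * Real.log 2 := by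
    rcases ha.eq_or_lt with h | hpa
    · rw [← h]; simp only [zero_add, Real.log_zero, zero_mul]
      nlinarith
    rcases hb.eq_or_lt with h | hpb
    · rw [← h]; simp only [add_zero, Real.log_zero, zero_mul]
      nlinarith
    have hq : (0:ℝ) < a + b := by linarith
    have h1 : Real.log ((a + b) / (2 * a)) ≤ (a + b) / (2 * a) - 1 :=
      Real.log_le_sub_one_of_pos (by positivity)
    have h2 : Real.log ((a + b) / (2 * b)) ≤ (a + b) / (2 * b) - 1 :=
      Real.log_le_sub_one_of_pos (by positivity)
    have e1 : Real.log ((a + b) / (2 * a)) = Real.log (a + b) - Real.log 2 - Real.log a := by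
      rw [Real.log_div (ne_of_gt hq) (by positivity), Real.log_mul two_ne_zero (ne_of_gt hpa)]
      ring
    have e2 : Real.log ((a + b) / (2 * b)) = Real.log (a + b) - Real.log 2 - Real.log b := by
      rw [Real.log_div (ne_of_gt hq) (by positivity), Real.log_mul two_ne_zero (ne_of_gt hpb)]
      ring
    rw [e1] at h1; rw [e2] at h2
    have h1' : a * (Real.log (a + b) - Real.log 2 - Real.log a) ≤ (a + b) / 2 - a := by
      have := mul_le_mul_of_nonneg_left h1 ha
      calc a * (Real.log (a + b) - Real.log 2 - Real.log a)
          ≤ a * ((a + b) / (2 * a) - 1) := this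
        _ = (a + b) / 2 - a := by field_simp
    have h2' : b * (Real.log (a + b) - Real.log 2 - Real.log b) ≤ (a + b) / 2 - b := by
      have := mul_le_mul_of_nonneg_left h2 hb
      calc b * (Real.log (a + b) - Real.log 2 - Real.log b)
          ≤ b * ((a + b) / (2 * b) - 1) := this
        _ = (a + b) / 2 - b := by field_simp
    nlinarith [h1', h2']
  simp only [Real.logb, div_eq_mul_inv]
  have e3 : (a + b) * (Real.log (a + b) * (Real.log 2)⁻¹)
      = ((a + b) * Real.log (a + b)) * (Real.log 2)⁻¹ := by ring
  rw [e3]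
  have h2 : a * (Real.log a * (Real.log 2)⁻¹) + b * (Real.log b * (Real.log 2)⁻¹) + (a + b)
      = (a * Real.log a + b * Real.log b + (a + b) * Real.log 2) * (Real.log 2)⁻¹ := by
    field_simp
  rw [h2]
  exact mul_le_mul_of_nonneg_right key (by positivity)

lemma segEntropy_eq (p : (Fin K → Bool) → ℝ) (A : Finset (Fin K)) :
    segEntropy p A = -∑ v ∈ reps A, marg p A v * Real.logb 2 (marg p A v) := rfl

lemma sum_reps_insert {x : Fin K} {A : Finset (Fin K)} (hx : x ∉ A)
    (f : (Fin K → Bool) → ℝ) :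
    ∑ v ∈ reps (insert x A), f v
      = ∑ v ∈ reps A, (f v + f (Function.update v x true)) := by
  have hdis : Disjoint (reps A) ((reps A).image (fun v => Function.update v x true)) := by
    rw [Finset.disjoint_left]
    rintro w hw hw2
    obtain ⟨v, hv, rfl⟩ := Finset.mem_image.1 hw2
    have := mem_reps_false hx hw
    simp at this
  rw [reps_insert hx, Finset.sum_union hdis, Finset.sum_image, Finset.sum_add_distrib]
  intro v hv w hw h
  funext i
  by_cases hix : i = x
  · subst hix; rw [mem_reps_false hx hv, mem_reps_false hx hw]
  · have := congrFun h i
    beta_reduce at this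
    rwa [Function.update_apply, if_neg hix, Function.update_apply, if_neg hix] at this

lemma segEntropy_insert {p : (Fin K → Bool) → ℝ} (hp : ∀ t, 0 ≤ p t)
    {x : Fin K} {A : Finset (Fin K)} (hx : x ∉ A) :
    segEntropy p A ≤ segEntropy p (insert x A) ∧
      segEntropy p (insert x A) ≤ segEntropy p A + ∑ t : Fin K → Bool, p t := by
  have hB := fun v : Fin K → Bool => marg_nonneg (p := p) hp (insert x A) v
  have hsplit : ∀ v ∈ reps A, marg p A v
      = marg p (insert x A) v + marg p (insert x A) (Function.update v x true) :=
    fun v hv => marg_split hx (mem_reps_false hx hv)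
  rw [segEntropy_eq, segEntropy_eq,
    sum_reps_insert hx (fun v => marg p (insert x A) v * Real.logb 2 (marg p (insert x A) v)),
    ← sum_marg A]
  constructor
  · rw [neg_le_neg_iff]
    refine Finset.sum_le_sum fun v hv => ?_
    rw [hsplit v hv]
    exact pt_mono (hB v) (hB (Function.update v x true))
  · have hle : ∀ v ∈ reps A,
        marg p A v * Real.logb 2 (marg p A v)
          ≤ (marg p (insert x A) v * Real.logb 2 (marg p (insert x A) v)
            + marg p (insert x A) (Function.update v x true)
              * Real.logb 2 (marg p (insert x A) (Function.update v x true)))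
            + marg p A v := by
      intro v hv
      rw [hsplit v hv]
      exact pt_sub (hB v) (hB (Function.update v x true))
    have h := Finset.sum_le_sum hle
    rw [Finset.sum_add_distrib] at h
    linarith [h]

lemma ex_insert {A B : Finset (Fin K)} (h : A ⊆ B) (hc : B.card = A.card + 1) :
    ∃ x, x ∉ A ∧ B = insert x A := by
  have h1 : (B \ A).card = 1 := by rw [Finset.card_sdiff_of_subset h]; omega
  obtain ⟨x, hx⟩ := Finset.card_eq_one.1 h1
  have hxB : x ∈ B \ A := hx ▸ Finset.mem_singleton_self x
  refine ⟨x, (Finset.mem_sdiff.1 hxB).2, ?_⟩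
  rw [Finset.insert_eq, Finset.union_comm, ← hx, Finset.union_sdiff_of_subset h]

lemma empDist_nonneg (D : Multiset (Fin K → Bool)) : ∀ t, 0 ≤ empDist D t := by
  intro t
  unfold empDist
  positivity

lemma empDist_sum (D : Multiset (Fin K → Bool)) (hD : Multiset.card D ≠ 0) :
    ∑ t : Fin K → Bool, empDist D t = 1 := by
  unfold empDist
  rw [← Finset.sum_div]
  rw [div_eq_one_iff_eq (by exact_mod_cast hD)]
  have : ∑ t : Fin K → Bool, (D.count t : ℝ)
      = ((∑ t : Fin K → Bool, D.count t : ℕ) : ℝ) := by push_cast; rfl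
  rw [this]
  congr 1
  rw [← Multiset.toFinset_sum_count_eq D]
  exact (Finset.sum_subset (Finset.subset_univ _) (fun t _ ht => by
    simpa [Multiset.count_eq_zero] using ht)).symm

end AuxLemmas

/-- If `X`, `Y` are segments of length `N` sharing `N - 1` items and
`N ≥ log₂|D| - log₂ log₂|D| + 2`, then
`score(X ∪ Y) ≥ score(X) + score(Y) - score(X ∩ Y)`. -/
theorem long_segments_prunable {K : ℕ} (D : Multiset (Fin K → Bool))
    (hD : 2 ≤ Multiset.card D) (o : Equiv.Perm (Fin K)) (N : ℕ) (X Y : Finset (Fin K))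
    (hX : IsSegment o X) (hY : IsSegment o Y)
    (hXcard : X.card = N) (hYcard : Y.card = N) (hXY : (X ∩ Y).card = N - 1) (hne : X ≠ Y)
    (hN : (N : ℝ) ≥ Real.logb 2 (Multiset.card D)
        - Real.logb 2 (Real.logb 2 (Multiset.card D)) + 2) :
    segScore D (X ∪ Y) ≥ segScore D X + segScore D Y - segScore D (X ∩ Y) := by
  classical
  set p := empDist D with hpdef
  have hp : ∀ t, 0 ≤ p t := empDist_nonneg D
  set m : ℝ := (Multiset.card D : ℝ) with hmdef
  have hm2 : (2:ℝ) ≤ m := by rw [hmdef]; exact_mod_cast hD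
  have hm0 : (0:ℝ) < m := by linarith
  have hsum : ∑ t : Fin K → Bool, p t = 1 := empDist_sum D (by omega)
  -- N ≥ 1
  have hN1 : 1 ≤ N := by
    by_contra h
    push_neg at h
    interval_cases N
    apply hne
    rw [Finset.card_eq_zero.1 hXcard, Finset.card_eq_zero.1 hYcard]
  -- cardinalities
  have hcard := Finset.card_union_add_card_inter X Y
  rw [hXcard, hYcard, hXY] at hcard
  have hUcard : (X ∪ Y).card = N + 1 := by omega
  -- decompositions
  obtain ⟨y, hyY, hUeq⟩ := ex_insert (Finset.subset_union_right (s₁ := X))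
    (by rw [hUcard, hYcard])
  obtain ⟨x, hxI, hXeq⟩ := ex_insert (Finset.inter_subset_left (s₂ := Y))
    (by rw [hXcard, hXY]; omega)
  -- entropy inequalities
  have hHY : segEntropy p Y ≤ segEntropy p (X ∪ Y) := by
    rw [hUeq]; exact (segEntropy_insert hp hyY).1
  have hHX : segEntropy p X ≤ segEntropy p (X ∩ Y) + 1 := by
    have := (segEntropy_insert hp hxI).2
    rw [hsum, ← hXeq] at this
    exact this
  -- numeric inequality
  set L : ℝ := Real.logb 2 m with hLdef
  have hL1 : (1:ℝ) ≤ L := by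
    have := Real.logb_le_logb_of_le one_lt_two (by norm_num : (0:ℝ) < 2) hm2
    simpa using this
  have hL0 : (0:ℝ) < L := by linarith
  have hP : (2:ℝ) ^ (N - 1 : ℕ) = (2:ℝ) ^ ((N:ℝ) - 1) := by
    rw [← Real.rpow_natCast]
    congr 1
    push_cast [Nat.cast_sub hN1]
    ring
  have hexp : (N:ℝ) - 2 ≥ L - Real.logb 2 L := by
    have : (N : ℝ) ≥ L - Real.logb 2 L + 2 := hN
    linarith
  have hpow : (2:ℝ) ^ ((N:ℝ) - 2) ≥ m / L := by
    have h1 : (2:ℝ) ^ (L - Real.logb 2 L) ≤ (2:ℝ) ^ ((N:ℝ) - 2) :=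
      (Real.rpow_le_rpow_left_iff one_lt_two).2 hexp
    have h2 : (2:ℝ) ^ (L - Real.logb 2 L) = m / L := by
      rw [Real.rpow_sub (by norm_num : (0:ℝ) < 2),
        Real.rpow_logb (by norm_num) (by norm_num) hm0,
        Real.rpow_logb (by norm_num) (by norm_num) hL0]
    linarith [h2 ▸ h1]
  have hkey : m ≤ L / 2 * (2:ℝ) ^ (N - 1 : ℕ) := by
    have h3 : (2:ℝ) ^ ((N:ℝ) - 1) = (2:ℝ) ^ ((N:ℝ) - 2) * 2 := by
      rw [← Real.rpow_add_one (by norm_num : (2:ℝ) ≠ 0)]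
      congr 1; ring
    have h4 : m / L ≤ (2:ℝ) ^ ((N:ℝ) - 2) := hpow
    have h5 : m ≤ L * (2:ℝ) ^ ((N:ℝ) - 2) := by
      rw [div_le_iff₀ hL0] at h4
      linarith [h4]
    rw [hP, h3]
    linarith [h5]
  -- power identities
  have hN' : N = (N - 1) + 1 := by omega
  have e1 : (2:ℝ) ^ N = (2:ℝ) ^ (N - 1 : ℕ) * 2 := by
    conv_lhs => rw [hN']
    rw [pow_succ]
  have e2 : (2:ℝ) ^ (N + 1) = (2:ℝ) ^ N * 2 := by rw [pow_succ]
  -- assemble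
  unfold segScore
  rw [hUcard, hXcard, hYcard, hXY]
  rw [← hpdef, ← hmdef, ← hLdef]
  have mHX : m * segEntropy p X ≤ m * (segEntropy p (X ∩ Y) + 1) :=
    mul_le_mul_of_nonneg_left hHX (le_of_lt hm0)
  have mHY : m * segEntropy p Y ≤ m * segEntropy p (X ∪ Y) :=
    mul_le_mul_of_nonneg_left hHY (le_of_lt hm0)
  nlinarith [mHX, mHY, hkey, e1, e2]
end

section
/- Let o be a linear order on the K attributes, 𝒞 ∈ Seg(o), and let 𝒳 = {X : X ⊆ C for some C ∈ 𝒞} be the downward closure of 𝒞 (including the empty set). A strictly positive probability distribution p on {0,1}^K belongs to M(𝒞) if and only if there exist real constants (r_X)_{X ∈ 𝒳} such that p(A = t) = exp(∑_{X ∈ 𝒳} r_X S_X(t)) for every t ∈ {0,1}^K. -/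
open Finset

/-- The indicator function `S_X` of an itemset `X`: `S_X(t) = ∏_{i ∈ X} t_i`. -/
def indFn {K : ℕ} (X : Finset (Fin K)) : (Fin K → Bool) → ℝ :=
  fun t => ∏ i ∈ X, (if t i then (1 : ℝ) else 0)


/-! ### Auxiliary lemmas -/


/-- `F` depends only on the coordinates in `S`. -/
def DepOn {K : ℕ} (S : Finset (Fin K)) (F : (Fin K → Bool) → ℝ) : Prop :=
  ∀ u v : Fin K → Bool, (∀ k ∈ S, u k = v k) → F u = F v

lemma DepOn.mono {K : ℕ} {S S' : Finset (Fin K)} {F} (h : DepOn S F) (hs : S ⊆ S') :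
    DepOn S' F := fun u v huv => h u v fun k hk => huv k (hs hk)

lemma DepOn.finprod {K : ℕ} {S : Finset (Fin K)} {s : Finset ℕ} {f : ℕ → (Fin K → Bool) → ℝ}
    (h : ∀ j ∈ s, DepOn S (f j)) : DepOn S (fun t => ∏ j ∈ s, f j t) := by
  intro u v huv
  exact Finset.prod_congr rfl fun j hj => h j hj u v huv

/-- The core factorization lemma. -/
lemma sum_factor {K : ℕ} (W P Q : Finset (Fin K))
    (hWP : ∀ k ∈ W, k ∉ P) (hWQ : ∀ k ∈ W, k ∉ Q) (hPQ : ∀ k ∈ P, k ∉ Q)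
    (hcov : ∀ k, k ∈ W ∨ k ∈ P ∨ k ∈ Q)
    (g h : (Fin K → Bool) → ℝ)
    (hg : ∀ u v : Fin K → Bool, (∀ k, k ∉ Q → u k = v k) → g u = g v)
    (hh : ∀ u v : Fin K → Bool, (∀ k, k ∉ P → u k = v k) → h u = h v)
    (t : Fin K → Bool) :
    ∑ u ∈ univ.filter (fun u : Fin K → Bool => ∀ k ∈ W, u k = t k), g u * h u
      = (∑ u ∈ univ.filter (fun u : Fin K → Bool => ∀ k ∈ W ∪ Q, u k = t k), g u)
        * ∑ u ∈ univ.filter (fun u : Fin K → Bool => ∀ k ∈ W ∪ P, u k = t k), h u := by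
  classical
  rw [Finset.sum_mul_sum, ← Finset.sum_product']
  apply Finset.sum_bij'
    (i := fun u _ => ((fun k => if k ∈ Q then t k else u k : Fin K → Bool),
                      (fun k => if k ∈ P then t k else u k : Fin K → Bool)))
    (j := fun x _ => fun k => if k ∈ Q then x.2 k else x.1 k)
  · intro u hu
    simp only [mem_filter, mem_univ, true_and] at hu ⊢
    rw [Finset.mem_product]
    constructor
    · simp only [mem_filter, mem_univ, true_and]
      intro k hk
      by_cases hq : k ∈ Q
      · simp [hq]
      · rcases Finset.mem_union.1 hk with hw | hq'
        · simp [hq, hu k hw]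
        · exact absurd hq' hq
    · simp only [mem_filter, mem_univ, true_and]
      intro k hk
      by_cases hp : k ∈ P
      · simp [hp]
      · rcases Finset.mem_union.1 hk with hw | hp'
        · simp [hp, hu k hw]
        · exact absurd hp' hp
  · intro x hx
    rw [Finset.mem_product] at hx
    simp only [mem_filter, mem_univ, true_and] at hx ⊢
    intro k hk
    have hq : k ∉ Q := hWQ k hk
    simp only [hq, if_false]
    exact hx.1 k (Finset.mem_union_left _ hk)
  · intro u hu
    funext k
    by_cases hq : k ∈ Q
    · have hp : k ∉ P := fun hp => hPQ k hp hq
      simp [hq, hp]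
    · simp [hq]
  · intro x hx
    rw [Finset.mem_product] at hx
    simp only [mem_filter, mem_univ, true_and] at hx
    ext k
    · by_cases hq : k ∈ Q
      · simp only [hq, if_true]
        exact (hx.1 k (Finset.mem_union_right _ hq)).symm
      · simp [hq]
    · by_cases hp : k ∈ P
      · simp only [hp, if_true]
        exact (hx.2 k (Finset.mem_union_right _ hp)).symm
      · simp only [hp, if_false]
        by_cases hq : k ∈ Q
        · simp [hq]
        · rcases hcov k with hw | hp' | hq'
          · simp only [hq, if_false]
            rw [hx.1 k (Finset.mem_union_left _ hw), hx.2 k (Finset.mem_union_left _ hw)]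
          · exact absurd hp' hp
          · exact absurd hq' hq
  · intro u hu
    congr 1
    · exact hg u _ fun k hk => by simp [hk]
    · exact hh u _ fun k hk => by simp [hk]

lemma sum_pullout {K : ℕ} (C W : Finset (Fin K)) (hCW : C ⊆ W)
    (F G : (Fin K → Bool) → ℝ) (hF : DepOn C F) (t : Fin K → Bool) :
    ∑ u ∈ univ.filter (fun u : Fin K → Bool => ∀ k ∈ W, u k = t k), F u * G u
      = F t * ∑ u ∈ univ.filter (fun u : Fin K → Bool => ∀ k ∈ W, u k = t k), G u := by
  rw [Finset.mul_sum]
  apply Finset.sum_congr rfl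
  intro u hu
  simp only [mem_filter, mem_univ, true_and] at hu
  rw [hF u t fun k hk => hu k (hCW hk)]

lemma indFn_eq {K : ℕ} (X : Finset (Fin K)) (t : Fin K → Bool) :
    indFn X t = if X ⊆ univ.filter (fun k => t k = true) then 1 else 0 := by
  unfold indFn
  by_cases h : X ⊆ univ.filter (fun k => t k = true)
  · rw [if_pos h]
    apply Finset.prod_eq_one
    intro i hi
    have := h hi
    simp only [mem_filter, mem_univ, true_and] at this
    simp [this]
  · rw [if_neg h]
    obtain ⟨i, hiX, hi⟩ : ∃ i ∈ X, i ∉ univ.filter (fun k => t k = true) := by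
      by_contra hc
      push_neg at hc
      exact h hc
    apply Finset.prod_eq_zero hiX
    simp only [mem_filter, mem_univ, true_and] at hi
    simp [hi]

lemma exists_basis {K : ℕ} (C : Finset (Fin K)) (F : (Fin K → Bool) → ℝ)
    (hF : DepOn C F) :
    ∃ r : Finset (Fin K) → ℝ, (∀ X, ¬ X ⊆ C → r X = 0) ∧
      ∀ t, F t = ∑ X : Finset (Fin K), r X * indFn X t := by
  classical
  set χ : Finset (Fin K) → (Fin K → Bool) := fun Y k => decide (k ∈ Y) with hχ
  refine ⟨fun X => if X ⊆ C then ∑ Y ∈ X.powerset, (-1:ℝ)^((X \ Y).card) * F (χ Y) else 0,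
    fun X hX => by simp [hX], fun t => ?_⟩
  set T : Finset (Fin K) := (univ.filter (fun k => t k = true)) ∩ C with hT
  have step1 : ∑ X : Finset (Fin K),
      (if X ⊆ C then ∑ Y ∈ X.powerset, (-1:ℝ)^((X \ Y).card) * F (χ Y) else 0) * indFn X t
      = ∑ X ∈ T.powerset, ∑ Y ∈ X.powerset, (-1:ℝ)^((X \ Y).card) * F (χ Y) := by
    rw [← Finset.sum_subset (Finset.subset_univ T.powerset)]
    · apply Finset.sum_congr rfl
      intro X hX
      rw [Finset.mem_powerset] at hX
      have h1 : X ⊆ C := hX.trans (Finset.inter_subset_right)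
      have h2 : X ⊆ univ.filter (fun k => t k = true) :=
        hX.trans (Finset.inter_subset_left)
      rw [indFn_eq, if_pos h2, if_pos h1, mul_one]
    · intro X _ hX
      rw [Finset.mem_powerset] at hX
      by_cases h1 : X ⊆ C
      · have h2 : ¬ X ⊆ univ.filter (fun k => t k = true) := by
          intro h2
          exact hX (Finset.subset_inter h2 h1)
        rw [indFn_eq, if_neg h2, mul_zero]
      · rw [if_neg h1, zero_mul]
  rw [step1]
  have step2 : ∑ X ∈ T.powerset, ∑ Y ∈ X.powerset, (-1:ℝ)^((X \ Y).card) * F (χ Y)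
      = ∑ Y ∈ T.powerset, ∑ X ∈ T.powerset.filter (fun X => Y ⊆ X),
          (-1:ℝ)^((X \ Y).card) * F (χ Y) := by
    apply Finset.sum_comm'
    intro X Y
    simp only [Finset.mem_powerset, Finset.mem_filter]
    constructor
    · rintro ⟨h1, h2⟩
      exact ⟨⟨h1, h2⟩, h2.trans h1⟩
    · rintro ⟨⟨h1, h2⟩, h3⟩
      exact ⟨h1, h2⟩
  rw [step2]
  have step3 : ∀ Y ∈ T.powerset,
      ∑ X ∈ T.powerset.filter (fun X => Y ⊆ X), (-1:ℝ)^((X \ Y).card) * F (χ Y)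
      = (if Y = T then 1 else 0) * F (χ Y) := by
    intro Y hY
    rw [Finset.mem_powerset] at hY
    rw [← Finset.sum_mul]
    congr 1
    have hbij : ∑ X ∈ T.powerset.filter (fun X => Y ⊆ X), (-1:ℝ)^((X \ Y).card)
        = ∑ Z ∈ (T \ Y).powerset, (-1:ℝ)^(Z.card) := by
      apply Finset.sum_bij' (i := fun X _ => X \ Y) (j := fun Z _ => Y ∪ Z)
      · intro X hX
        simp only [Finset.mem_filter, Finset.mem_powerset] at hX ⊢
        exact Finset.sdiff_subset_sdiff hX.1 (Finset.Subset.refl _)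
      · intro Z hZ
        simp only [Finset.mem_powerset] at hZ
        simp only [Finset.mem_filter, Finset.mem_powerset]
        exact ⟨Finset.union_subset hY (hZ.trans (Finset.sdiff_subset)), Finset.subset_union_left⟩
      · intro X hX
        simp only [Finset.mem_filter, Finset.mem_powerset] at hX
        rw [Finset.union_sdiff_of_subset hX.2]
      · intro Z hZ
        simp only [Finset.mem_powerset] at hZ
        rw [Finset.union_sdiff_cancel_left]
        exact Finset.disjoint_of_subset_right hZ (Finset.sdiff_disjoint.symm)
      · intro X hX; rfl
    have hcast : (∑ Z ∈ (T \ Y).powerset, (-1:ℝ)^(Z.card))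
        = ((∑ Z ∈ (T \ Y).powerset, (-1:ℤ)^(Z.card) : ℤ) : ℝ) := by
      push_cast
      rfl
    rw [hbij, hcast, Finset.sum_powerset_neg_one_pow_card]
    have hiff : T \ Y = ∅ ↔ Y = T := by
      rw [Finset.sdiff_eq_empty_iff_subset]
      exact ⟨fun h => Finset.Subset.antisymm hY h, fun h => h ▸ Finset.Subset.refl T⟩
    by_cases h : Y = T
    · rw [if_pos h, if_pos (hiff.2 h)]
      norm_num
    · rw [if_neg h, if_neg (fun hc => h (hiff.1 hc))]
      norm_num
  rw [Finset.sum_congr rfl step3]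
  rw [Finset.sum_eq_single_of_mem T (Finset.mem_powerset.2 (Finset.Subset.refl T))
    (fun Y _ hYT => by rw [if_neg hYT, zero_mul]), if_pos rfl, one_mul]
  exact (hF (χ T) t fun k hk => by simp [hχ, hT, hk]).symm

section helpers
variable {K : ℕ} (o : Equiv.Perm (Fin K)) (𝒞 : SegColl K)

lemma mem_segIv {a b : ℕ} {i : Fin K} :
    i ∈ segIv o a b ↔ a ≤ ((o.symm i : Fin K) : ℕ) ∧ ((o.symm i : Fin K) : ℕ) ≤ b := by
  unfold segIv
  simp only [Finset.mem_image, Finset.mem_filter, Finset.mem_univ, true_and]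
  constructor
  · rintro ⟨k, hk, rfl⟩
    simpa using hk
  · rintro ⟨h1, h2⟩
    exact ⟨o.symm i, ⟨h1, h2⟩, o.apply_symm_apply i⟩

lemma mem_seg {i : ℕ} {k : Fin K} :
    k ∈ 𝒞.seg o i ↔ 𝒞.s i ≤ ((o.symm k : Fin K) : ℕ) ∧ ((o.symm k : Fin K) : ℕ) ≤ 𝒞.e i :=
  mem_segIv o

lemma SegColl.e_le_e {i j : ℕ} (hij : i ≤ j) (hj : j < 𝒞.L) : 𝒞.e i ≤ 𝒞.e j := by
  induction j with
  | zero =>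
    obtain rfl : i = 0 := by omega
    exact le_rfl
  | succ n ih =>
    rcases Nat.eq_or_lt_of_le hij with h | h
    · subst h
      exact le_rfl
    · have h1 : 𝒞.e n < 𝒞.e (n + 1) := 𝒞.e_mono n hj
      have h2 := ih (by omega) (by omega)
      omega

lemma SegColl.s_le_s {i j : ℕ} (hij : i ≤ j) (hj : j < 𝒞.L) : 𝒞.s i ≤ 𝒞.s j := by
  induction j with
  | zero =>
    obtain rfl : i = 0 := by omega
    exact le_rfl
  | succ n ih =>
    rcases Nat.eq_or_lt_of_le hij with h | h
    · subst h
      exact le_rfl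
    · have h1 : 𝒞.s n < 𝒞.s (n + 1) := 𝒞.s_mono n hj
      have h2 := ih (by omega) (by omega)
      omega

lemma mem_ovl {i : ℕ} (hi : i + 1 < 𝒞.L) {k : Fin K} :
    k ∈ 𝒞.ovl o i ↔ 𝒞.s (i + 1) ≤ ((o.symm k : Fin K) : ℕ) ∧ ((o.symm k : Fin K) : ℕ) ≤ 𝒞.e i := by
  unfold SegColl.ovl SegColl.seg
  rw [Finset.mem_inter, mem_segIv, mem_segIv]
  have h1 : 𝒞.s i ≤ 𝒞.s (i + 1) := le_of_lt (𝒞.s_mono i hi)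
  have h2 : 𝒞.e i ≤ 𝒞.e (i + 1) := le_of_lt (𝒞.e_mono i hi)
  omega

end helpers

section core
variable {K : ℕ} (o : Equiv.Perm (Fin K)) (𝒞 : SegColl K)

/-- Sum over the coordinates at positions `< 𝒞.s i` of the product of the first `i` factors. -/
noncomputable def Aval (f : ℕ → (Fin K → Bool) → ℝ) (i : ℕ) (t : Fin K → Bool) : ℝ :=
  ∑ u ∈ univ.filter (fun u : Fin K → Bool =>
      ∀ k ∈ univ.filter (fun k : Fin K => 𝒞.s i ≤ ((o.symm k : Fin K) : ℕ)), u k = t k),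
    ∏ j ∈ Finset.range i, f j u

/-- Sum over the coordinates at positions `> 𝒞.e i` of the product of the last factors. -/
noncomputable def Bval (f : ℕ → (Fin K → Bool) → ℝ) (i : ℕ) (t : Fin K → Bool) : ℝ :=
  ∑ u ∈ univ.filter (fun u : Fin K → Bool =>
      ∀ k ∈ univ.filter (fun k : Fin K => ((o.symm k : Fin K) : ℕ) ≤ 𝒞.e i), u k = t k),
    ∏ j ∈ Finset.Ico (i + 1) 𝒞.L, f j u

lemma seg_marg (f : ℕ → (Fin K → Bool) → ℝ) (hdep : ∀ j < 𝒞.L, DepOn (𝒞.seg o j) (f j))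
    (i : ℕ) (hi : i < 𝒞.L) (t : Fin K → Bool) :
    marg (fun u => ∏ j ∈ Finset.range 𝒞.L, f j u) (𝒞.seg o i) t
      = Aval o 𝒞 f i t * (f i t * Bval o 𝒞 f i t) := by
  classical
  unfold marg
  have hsplit : ∀ u : Fin K → Bool,
      ∏ j ∈ Finset.range 𝒞.L, f j u
        = (∏ j ∈ Finset.range i, f j u) * ∏ j ∈ Finset.Ico i 𝒞.L, f j u := by
    intro u
    rw [Finset.range_eq_Ico, ← Finset.prod_Ico_consecutive _ (Nat.zero_le i) (le_of_lt hi),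
      ← Finset.range_eq_Ico]
  rw [Finset.sum_congr rfl (fun u _ => hsplit u)]
  have hse := 𝒞.s_le_e i hi
  rw [sum_factor (𝒞.seg o i)
      (univ.filter (fun k : Fin K => ((o.symm k : Fin K) : ℕ) < 𝒞.s i))
      (univ.filter (fun k : Fin K => 𝒞.e i < ((o.symm k : Fin K) : ℕ)))
      (fun k hk => by rw [mem_seg] at hk; simp only [mem_filter, mem_univ, true_and]; omega)
      (fun k hk => by rw [mem_seg] at hk; simp only [mem_filter, mem_univ, true_and]; omega)
      (fun k hk => by simp only [mem_filter, mem_univ, true_and] at hk ⊢; omega)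
      (fun k => by rw [mem_seg]; simp only [mem_filter, mem_univ, true_and]; omega)
      _ _
      (fun u v huv => by
        apply Finset.prod_congr rfl
        intro j hj
        rw [Finset.mem_range] at hj
        apply hdep j (lt_trans hj hi) u v
        intro k hk
        apply huv
        rw [mem_seg] at hk
        have : 𝒞.e j ≤ 𝒞.e i := 𝒞.e_le_e (le_of_lt hj) hi
        simp only [mem_filter, mem_univ, true_and]
        omega)
      (fun u v huv => by
        apply Finset.prod_congr rfl
        intro j hj
        rw [Finset.mem_Ico] at hj
        apply hdep j hj.2 u v
        intro k hk
        apply huv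
        rw [mem_seg] at hk
        have : 𝒞.s i ≤ 𝒞.s j := 𝒞.s_le_s hj.1 hj.2
        simp only [mem_filter, mem_univ, true_and]
        omega)
      t]
  have hWQ : 𝒞.seg o i ∪ univ.filter (fun k : Fin K => 𝒞.e i < ((o.symm k : Fin K) : ℕ))
      = univ.filter (fun k : Fin K => 𝒞.s i ≤ ((o.symm k : Fin K) : ℕ)) := by
    ext k
    rw [Finset.mem_union, mem_seg]
    simp only [mem_filter, mem_univ, true_and]
    omega
  have hWP : 𝒞.seg o i ∪ univ.filter (fun k : Fin K => ((o.symm k : Fin K) : ℕ) < 𝒞.s i)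
      = univ.filter (fun k : Fin K => ((o.symm k : Fin K) : ℕ) ≤ 𝒞.e i) := by
    ext k
    rw [Finset.mem_union, mem_seg]
    simp only [mem_filter, mem_univ, true_and]
    omega
  rw [hWQ, hWP]
  congr 1
  have hsplit2 : ∀ u : Fin K → Bool,
      ∏ j ∈ Finset.Ico i 𝒞.L, f j u = f i u * ∏ j ∈ Finset.Ico (i + 1) 𝒞.L, f j u :=
    fun u => Finset.prod_eq_prod_Ico_succ_bot hi _
  rw [Finset.sum_congr rfl (fun u _ => hsplit2 u)]
  rw [sum_pullout (𝒞.seg o i) _ ?_ _ _ (hdep i hi) t]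
  · rfl
  · intro k hk
    rw [mem_seg] at hk
    simp only [mem_filter, mem_univ, true_and]
    omega

lemma ovl_marg (f : ℕ → (Fin K → Bool) → ℝ) (hdep : ∀ j < 𝒞.L, DepOn (𝒞.seg o j) (f j))
    (i : ℕ) (hi : i + 1 < 𝒞.L) (t : Fin K → Bool) :
    marg (fun u => ∏ j ∈ Finset.range 𝒞.L, f j u) (𝒞.ovl o i) t
      = Aval o 𝒞 f (i + 1) t * Bval o 𝒞 f i t := by
  classical
  unfold marg
  have hcv := 𝒞.covers i hi
  have hse := 𝒞.s_le_e i (by omega)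
  have hsplit : ∀ u : Fin K → Bool,
      ∏ j ∈ Finset.range 𝒞.L, f j u
        = (∏ j ∈ Finset.range (i + 1), f j u) * ∏ j ∈ Finset.Ico (i + 1) 𝒞.L, f j u := by
    intro u
    rw [Finset.range_eq_Ico, ← Finset.prod_Ico_consecutive _ (Nat.zero_le (i + 1)) (le_of_lt hi),
      ← Finset.range_eq_Ico]
  rw [Finset.sum_congr rfl (fun u _ => hsplit u)]
  rw [sum_factor (𝒞.ovl o i)
      (univ.filter (fun k : Fin K => ((o.symm k : Fin K) : ℕ) < 𝒞.s (i + 1)))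
      (univ.filter (fun k : Fin K => 𝒞.e i < ((o.symm k : Fin K) : ℕ)))
      (fun k hk => by rw [mem_ovl o 𝒞 hi] at hk; simp only [mem_filter, mem_univ, true_and]; omega)
      (fun k hk => by rw [mem_ovl o 𝒞 hi] at hk; simp only [mem_filter, mem_univ, true_and]; omega)
      (fun k hk => by simp only [mem_filter, mem_univ, true_and] at hk ⊢; omega)
      (fun k => by rw [mem_ovl o 𝒞 hi]; simp only [mem_filter, mem_univ, true_and]; omega)
      _ _
      (fun u v huv => by
        apply Finset.prod_congr rfl
        intro j hj
        rw [Finset.mem_range] at hj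
        apply hdep j (by omega) u v
        intro k hk
        apply huv
        rw [mem_seg] at hk
        have : 𝒞.e j ≤ 𝒞.e i := 𝒞.e_le_e (by omega) (by omega)
        simp only [mem_filter, mem_univ, true_and]
        omega)
      (fun u v huv => by
        apply Finset.prod_congr rfl
        intro j hj
        rw [Finset.mem_Ico] at hj
        apply hdep j hj.2 u v
        intro k hk
        apply huv
        rw [mem_seg] at hk
        have : 𝒞.s (i + 1) ≤ 𝒞.s j := 𝒞.s_le_s hj.1 hj.2
        simp only [mem_filter, mem_univ, true_and]
        omega)
      t]
  have hWQ : 𝒞.ovl o i ∪ univ.filter (fun k : Fin K => 𝒞.e i < ((o.symm k : Fin K) : ℕ))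
      = univ.filter (fun k : Fin K => 𝒞.s (i + 1) ≤ ((o.symm k : Fin K) : ℕ)) := by
    ext k
    rw [Finset.mem_union, mem_ovl o 𝒞 hi]
    simp only [mem_filter, mem_univ, true_and]
    omega
  have hWP : 𝒞.ovl o i ∪ univ.filter (fun k : Fin K => ((o.symm k : Fin K) : ℕ) < 𝒞.s (i + 1))
      = univ.filter (fun k : Fin K => ((o.symm k : Fin K) : ℕ) ≤ 𝒞.e i) := by
    ext k
    rw [Finset.mem_union, mem_ovl o 𝒞 hi]
    simp only [mem_filter, mem_univ, true_and]
    omega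
  rw [hWQ, hWP]
  rfl

lemma Aval_zero (f : ℕ → (Fin K → Bool) → ℝ) (t : Fin K → Bool) : Aval o 𝒞 f 0 t = 1 := by
  unfold Aval
  rw [𝒞.s_first]
  have h1 : univ.filter (fun k : Fin K => 0 ≤ ((o.symm k : Fin K) : ℕ)) = univ := by
    simp
  rw [h1]
  have h2 : univ.filter (fun u : Fin K → Bool => ∀ k ∈ univ, u k = t k) = {t} := by
    ext u
    simp [funext_iff]
  rw [h2, Finset.sum_singleton, Finset.prod_range_zero]

lemma Bval_last (f : ℕ → (Fin K → Bool) → ℝ) (t : Fin K → Bool) :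
    Bval o 𝒞 f (𝒞.L - 1) t = 1 := by
  unfold Bval
  rw [𝒞.e_last]
  have h1 : univ.filter (fun k : Fin K => ((o.symm k : Fin K) : ℕ) ≤ K - 1) = univ := by
    ext k
    have := (o.symm k).isLt
    simp only [mem_filter, mem_univ, true_and, iff_true]
    omega
  rw [h1]
  have h2 : univ.filter (fun u : Fin K → Bool => ∀ k ∈ univ, u k = t k) = {t} := by
    ext u
    simp [funext_iff]
  have h3 : 𝒞.L - 1 + 1 = 𝒞.L := by have := 𝒞.hL; omega
  rw [h2, Finset.sum_singleton, h3, Finset.Ico_self, Finset.prod_empty]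

lemma model_of_factors (f : ℕ → (Fin K → Bool) → ℝ)
    (hdep : ∀ j < 𝒞.L, DepOn (𝒞.seg o j) (f j)) (t : Fin K → Bool) :
    (∏ i ∈ Finset.range 𝒞.L, f i t)
        * ∏ i ∈ Finset.range (𝒞.L - 1),
            marg (fun u => ∏ j ∈ Finset.range 𝒞.L, f j u) (𝒞.ovl o i) t
      = ∏ i ∈ Finset.range 𝒞.L,
          marg (fun u => ∏ j ∈ Finset.range 𝒞.L, f j u) (𝒞.seg o i) t := by
  obtain ⟨n, hn⟩ : ∃ n, 𝒞.L = n + 1 := ⟨𝒞.L - 1, by have := 𝒞.hL; omega⟩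
  have hL1 : 𝒞.L - 1 = n := by omega
  rw [Finset.prod_congr rfl (fun i hi => ovl_marg o 𝒞 f hdep i
    (by rw [Finset.mem_range] at hi; omega) t)]
  rw [Finset.prod_congr rfl (fun i hi => seg_marg o 𝒞 f hdep i
    (by rwa [Finset.mem_range] at hi) t)]
  have e1 : ∏ i ∈ Finset.range 𝒞.L, (Aval o 𝒞 f i t * (f i t * Bval o 𝒞 f i t))
      = (∏ i ∈ Finset.range 𝒞.L, Aval o 𝒞 f i t) * ((∏ i ∈ Finset.range 𝒞.L, f i t)
        * ∏ i ∈ Finset.range 𝒞.L, Bval o 𝒞 f i t) := by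
    rw [Finset.prod_mul_distrib, Finset.prod_mul_distrib]
  have e2 : ∏ i ∈ Finset.range 𝒞.L, Aval o 𝒞 f i t
      = (∏ i ∈ Finset.range n, Aval o 𝒞 f (i + 1) t) * Aval o 𝒞 f 0 t := by
    rw [hn, Finset.prod_range_succ']
  have e3 : ∏ i ∈ Finset.range 𝒞.L, Bval o 𝒞 f i t
      = (∏ i ∈ Finset.range n, Bval o 𝒞 f i t) * Bval o 𝒞 f n t := by
    rw [hn, Finset.prod_range_succ]
  have e4 : Bval o 𝒞 f n t = 1 := by
    rw [← hL1]; exact Bval_last o 𝒞 f t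
  rw [e1, e2, e3, e4, Aval_zero o 𝒞 f t, hL1, Finset.prod_mul_distrib]
  ring

end core

lemma marg_pos {K : ℕ} (p : (Fin K → Bool) → ℝ) (hpos : ∀ t, 0 < p t)
    (X : Finset (Fin K)) (t : Fin K → Bool) : 0 < marg p X t := by
  unfold marg
  apply Finset.sum_pos (fun u _ => hpos u)
  exact ⟨t, Finset.mem_filter.2 ⟨Finset.mem_univ t, fun k _ => rfl⟩⟩

lemma marg_dep {K : ℕ} (p : (Fin K → Bool) → ℝ) (X : Finset (Fin K)) :
    DepOn X (fun t => marg p X t) := by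
  intro u v huv
  unfold marg
  apply Finset.sum_congr _ (fun _ _ => rfl)
  apply Finset.filter_congr
  intro w _
  constructor
  · intro h k hk
    rw [h k hk, huv k hk]
  · intro h k hk
    rw [h k hk, huv k hk]

lemma log_marg_dep {K : ℕ} (p : (Fin K → Bool) → ℝ) (X : Finset (Fin K)) :
    DepOn X (fun t => Real.log (marg p X t)) := by
  intro u v huv
  exact congrArg Real.log (marg_dep p X u v huv)

/-- A strictly positive distribution `p` belongs to `M(𝒞)` iff it has an
exponential form `p(A = t) = exp(∑_{X ∈ 𝒳} r_X S_X(t))` where `𝒳` is the downward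
closure of `𝒞` (i.e. the coefficients `r` vanish outside the downward closure). -/
theorem memModel_iff_exponential_form {K : ℕ} (o : Equiv.Perm (Fin K)) (𝒞 : SegColl K)
    (p : (Fin K → Bool) → ℝ) (hdist : IsDist p) (hpos : ∀ t, 0 < p t) :
    memModel o 𝒞 p ↔
      ∃ r : Finset (Fin K) → ℝ,
        (∀ X : Finset (Fin K), ¬ (∃ i < 𝒞.L, X ⊆ 𝒞.seg o i) → r X = 0) ∧
        ∀ t : Fin K → Bool,
          p t = Real.exp (∑ X : Finset (Fin K), r X * indFn X t) := by
  classical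
  constructor
  · rintro ⟨-, hmod⟩
    choose rC hrC0 hrC using fun i : ℕ =>
      exists_basis (𝒞.seg o i) _ (log_marg_dep p (𝒞.seg o i))
    choose rS hrS0 hrS using fun i : ℕ =>
      exists_basis (𝒞.ovl o i) _ (log_marg_dep p (𝒞.ovl o i))
    refine ⟨fun X => (∑ i ∈ Finset.range 𝒞.L, rC i X)
      - ∑ i ∈ Finset.range (𝒞.L - 1), rS i X, ?_, ?_⟩
    · intro X hX
      beta_reduce
      push_neg at hX
      have h1 : ∀ i ∈ Finset.range 𝒞.L, rC i X = 0 := fun i hi =>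
        hrC0 i X (hX i (Finset.mem_range.1 hi))
      have h2 : ∀ i ∈ Finset.range (𝒞.L - 1), rS i X = 0 := by
        intro i hi
        apply hrS0 i X
        intro hsub
        refine hX i (by rw [Finset.mem_range] at hi; omega) ?_
        exact hsub.trans Finset.inter_subset_left
      rw [Finset.sum_eq_zero h1, Finset.sum_eq_zero h2, sub_zero]
    · intro t
      beta_reduce
      have key : ∑ X : Finset (Fin K),
          ((∑ i ∈ Finset.range 𝒞.L, rC i X)
            - ∑ i ∈ Finset.range (𝒞.L - 1), rS i X) * indFn X t
          = (∑ i ∈ Finset.range 𝒞.L, Real.log (marg p (𝒞.seg o i) t))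
            - ∑ i ∈ Finset.range (𝒞.L - 1), Real.log (marg p (𝒞.ovl o i) t) := by
        have expand : ∀ X : Finset (Fin K),
            ((∑ i ∈ Finset.range 𝒞.L, rC i X)
              - ∑ i ∈ Finset.range (𝒞.L - 1), rS i X) * indFn X t
            = (∑ i ∈ Finset.range 𝒞.L, rC i X * indFn X t)
              - ∑ i ∈ Finset.range (𝒞.L - 1), rS i X * indFn X t := by
          intro X
          rw [sub_mul, Finset.sum_mul, Finset.sum_mul]
        rw [Finset.sum_congr rfl (fun X _ => expand X), Finset.sum_sub_distrib,
          Finset.sum_comm, Finset.sum_comm (γ := Finset (Fin K))]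
        congr 1
        · exact Finset.sum_congr rfl (fun i _ => (hrC i t).symm)
        · exact Finset.sum_congr rfl (fun i _ => (hrS i t).symm)
      rw [key]
      have hCpos : ∀ i ∈ Finset.range 𝒞.L, marg p (𝒞.seg o i) t ≠ 0 :=
        fun i _ => ne_of_gt (marg_pos p hpos _ t)
      have hSpos : ∀ i ∈ Finset.range (𝒞.L - 1), marg p (𝒞.ovl o i) t ≠ 0 :=
        fun i _ => ne_of_gt (marg_pos p hpos _ t)
      have hSprodpos : (0:ℝ) < ∏ i ∈ Finset.range (𝒞.L - 1), marg p (𝒞.ovl o i) t :=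
        Finset.prod_pos (fun i _ => marg_pos p hpos _ t)
      have hlog : Real.log (p t * ∏ i ∈ Finset.range (𝒞.L - 1), marg p (𝒞.ovl o i) t)
          = Real.log (∏ i ∈ Finset.range 𝒞.L, marg p (𝒞.seg o i) t) := by
        rw [hmod t]
      rw [Real.log_mul (ne_of_gt (hpos t)) (ne_of_gt hSprodpos),
        Real.log_prod hSpos, Real.log_prod hCpos] at hlog
      rw [← hlog]
      ring_nf
      rw [Real.exp_log (hpos t)]
  · rintro ⟨r, hsupp, hform⟩
    refine ⟨hdist, ?_⟩
    set idx : Finset (Fin K) → ℕ :=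
      fun X => if h : ∃ i, i < 𝒞.L ∧ X ⊆ 𝒞.seg o i then Nat.find h else 𝒞.L with hidx
    set f : ℕ → (Fin K → Bool) → ℝ :=
      fun i t => Real.exp (∑ X ∈ univ.filter (fun X => idx X = i), r X * indFn X t) with hf
    have hXsub : ∀ X : Finset (Fin K), ∀ i, i < 𝒞.L → idx X = i → X ⊆ 𝒞.seg o i := by
      intro X i hi hXi
      simp only [hidx] at hXi
      by_cases h : ∃ j, j < 𝒞.L ∧ X ⊆ 𝒞.seg o j
      · rw [dif_pos h] at hXi
        have := (Nat.find_spec h).2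
        rwa [hXi] at this
      · rw [dif_neg h] at hXi
        omega
    have hidx_lt : ∀ X : Finset (Fin K), idx X < 𝒞.L ∨ r X = 0 := by
      intro X
      by_cases h : ∃ j, j < 𝒞.L ∧ X ⊆ 𝒞.seg o j
      · left
        simp only [hidx]
        rw [dif_pos h]
        exact (Nat.find_spec h).1
      · right
        exact hsupp X h
    have hdep : ∀ j, j < 𝒞.L → DepOn (𝒞.seg o j) (f j) := by
      intro j hj u v huv
      simp only [hf]
      congr 1
      apply Finset.sum_congr rfl
      intro X hX
      simp only [Finset.mem_filter, Finset.mem_univ, true_and] at hX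
      have hsub := hXsub X j hj hX
      congr 1
      unfold indFn
      exact Finset.prod_congr rfl (fun k hk => by rw [huv k (hsub hk)])
    have hp : ∀ t, p t = ∏ i ∈ Finset.range 𝒞.L, f i t := by
      intro t
      rw [hform t]
      simp only [hf]
      rw [← Real.exp_sum]
      congr 1
      symm
      have hsplit := Finset.sum_filter_add_sum_filter_not Finset.univ
        (fun X : Finset (Fin K) => idx X < 𝒞.L) (fun X => r X * indFn X t)
      have hzero : ∑ X ∈ Finset.univ.filter
          (fun X : Finset (Fin K) => ¬ idx X < 𝒞.L), r X * indFn X t = 0 := by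
        apply Finset.sum_eq_zero
        intro X hX
        simp only [Finset.mem_filter, Finset.mem_univ, true_and] at hX
        rcases hidx_lt X with h | h
        · exact absurd h hX
        · rw [h, zero_mul]
      have hfib := Finset.sum_fiberwise_of_maps_to
        (g := idx) (t := Finset.range 𝒞.L)
        (s := Finset.univ.filter (fun X : Finset (Fin K) => idx X < 𝒞.L))
        (fun X hX => by
          simp only [Finset.mem_filter, Finset.mem_univ, true_and] at hX
          exact Finset.mem_range.2 hX)
        (fun X => r X * indFn X t)
      have hfibeq : ∀ i ∈ Finset.range 𝒞.L,
          (Finset.univ.filter (fun X : Finset (Fin K) => idx X < 𝒞.L)).filter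
            (fun X => idx X = i)
          = Finset.univ.filter (fun X : Finset (Fin K) => idx X = i) := by
        intro i hi
        rw [Finset.mem_range] at hi
        ext X
        simp only [Finset.mem_filter, Finset.mem_univ, true_and, Finset.filter_filter]
        constructor
        · rintro ⟨-, h⟩
          exact h
        · intro h
          exact ⟨by omega, h⟩
      calc ∑ i ∈ Finset.range 𝒞.L,
            ∑ X ∈ Finset.univ.filter (fun X : Finset (Fin K) => idx X = i), r X * indFn X t
          = ∑ i ∈ Finset.range 𝒞.L,
            ∑ X ∈ (Finset.univ.filter (fun X : Finset (Fin K) => idx X < 𝒞.L)).filter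
              (fun X => idx X = i), r X * indFn X t := by
            exact Finset.sum_congr rfl (fun i hi => by rw [hfibeq i hi])
        _ = ∑ X ∈ Finset.univ.filter (fun X : Finset (Fin K) => idx X < 𝒞.L),
              r X * indFn X t := hfib
        _ = ∑ X : Finset (Fin K), r X * indFn X t := by
            rw [← hsplit, hzero, add_zero]
    have hPeq : p = fun u => ∏ j ∈ Finset.range 𝒞.L, f j u := funext hp
    intro t
    rw [hPeq]
    exact model_of_factors o 𝒞 f hdep t
end
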